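/- Fix a real number q > 1 and an integer M. Let ι and κ be finite index sets, let α : ι → ℂ and β : κ → ℂ be functions, and let w : ι → ℤ and v : κ → ℤ be weight functions such that |α(i)| = q^{w(i)/2} for all i ∈ ι and |β(j)| = q^{v(j)/2} for all j ∈ κ. Assume that Σ_{i∈ι} (−1)^{w(i)}·α(i)^m = Σ_{j∈κ} (−1)^{v(j)}·β(j)^m for every integer m ≥ M. Then for every n ∈ ℤ the multiset of values {α(i) : i ∈ ι, w(i) = n} equals the multiset of values {β(j) : j ∈ κ, v(j) = n}; in particular Σ_{i : w(i)=n} α(i)^m = Σ_{j : v(j)=n} β(j)^m for every n ∈ ℤ and every integer m ≥ 1. -/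

import Mathlib

open Finset Matrix

lemma vand_fin {n : ℕ} (x : Fin n → ℂ) (hx : Function.Injective x)
    (c : Fin n → ℂ) (hc : ∀ k : ℕ, ∑ i, c i * x i ^ k = 0) : ∀ i, c i = 0 := by
  have hdet : (Matrix.vandermonde x).det ≠ 0 := Matrix.det_vandermonde_ne_zero_iff.2 hx
  have h0 : (Matrix.vandermonde x)ᵀ *ᵥ c = 0 := by
    funext k
    simpa [Matrix.mulVec, Matrix.vandermonde, dotProduct, mul_comm] using hc k
  have := Matrix.eq_zero_of_mulVec_eq_zero (by simpa using hdet) h0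
  exact fun i => congrFun this i

lemma vand_finset (S : Finset ℂ) (c : ℂ → ℂ)
    (hc : ∀ k : ℕ, ∑ z ∈ S, c z * z ^ k = 0) : ∀ z ∈ S, c z = 0 := by
  classical
  intro z hz
  let e := S.equivFin
  have hx : Function.Injective fun k : Fin S.card => ((e.symm k : S) : ℂ) :=
    fun a b hab => e.symm.injective (Subtype.ext hab)
  have hsum : ∀ k : ℕ, ∑ i, c ((e.symm i : S) : ℂ) * ((e.symm i : S) : ℂ) ^ k = 0 := by
    intro k
    rw [← hc k]
    rw [← Finset.sum_attach S (fun z => c z * z ^ k)]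
    exact (Equiv.sum_comp e.symm (fun z : S => c (z : ℂ) * (z : ℂ) ^ k)).symm ▸ rfl
  have := vand_fin _ hx _ hsum (e ⟨z, hz⟩)
  simpa using this

theorem statement8 (q : ℝ) (hq : 1 < q) (M : ℤ)
    {ι κ : Type*} [Fintype ι] [Fintype κ]
    (α : ι → ℂ) (β : κ → ℂ) (w : ι → ℤ) (v : κ → ℤ)
    (hα : ∀ i, ‖α i‖ = q ^ ((w i : ℝ) / 2))
    (hβ : ∀ j, ‖β j‖ = q ^ ((v j : ℝ) / 2))
    (h : ∀ m : ℤ, M ≤ m →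
      ∑ i, (-1 : ℂ) ^ (w i) * α i ^ m = ∑ j, (-1 : ℂ) ^ (v j) * β j ^ m) :
    (∀ n : ℤ,
        (Finset.univ.filter fun i => w i = n).val.map α
          = (Finset.univ.filter fun j => v j = n).val.map β) ∧
      ∀ n : ℤ, ∀ m : ℤ, 1 ≤ m →
        ∑ i ∈ Finset.univ.filter (fun i => w i = n), α i ^ m
          = ∑ j ∈ Finset.univ.filter (fun j => v j = n), β j ^ m := by
  classical
  have hq0 : (0:ℝ) < q := lt_trans one_pos hq
  -- weight uniqueness
  have wuniq : ∀ {n m : ℤ}, q ^ ((n:ℝ)/2) = q ^ ((m:ℝ)/2) → n = m := by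
    intro n m hnm
    have hmono : StrictMono fun y : ℝ => q ^ y :=
      fun a b hab => Real.rpow_lt_rpow_left_iff hq |>.2 hab
    have := hmono.injective hnm
    have : (n:ℝ) = m := by linarith
    exact_mod_cast this
  set S : Finset ℂ := (Finset.univ.image α) ∪ (Finset.univ.image β) with hS
  have hzne : ∀ z ∈ S, z ≠ 0 := by
    intro z hz
    rcases Finset.mem_union.1 hz with hz | hz <;>
      obtain ⟨i, -, rfl⟩ := Finset.mem_image.1 hz
    · intro h0
      have h1 := hα i
      rw [h0, norm_zero] at h1
      exact absurd h1.symm (ne_of_gt (Real.rpow_pos_of_pos hq0 _))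
    · intro h0
      have h1 := hβ i
      rw [h0, norm_zero] at h1
      exact absurd h1.symm (ne_of_gt (Real.rpow_pos_of_pos hq0 _))
  set cα : ℂ → ℂ := fun z => ∑ i ∈ Finset.univ.filter (fun i => α i = z), (-1:ℂ) ^ (w i)
    with hcα
  set cβ : ℂ → ℂ := fun z => ∑ j ∈ Finset.univ.filter (fun j => β j = z), (-1:ℂ) ^ (v j)
    with hcβ
  have hfibα : ∀ m : ℤ, ∑ z ∈ S, cα z * z ^ m = ∑ i, (-1:ℂ) ^ (w i) * α i ^ m := by
    intro m
    rw [← Finset.sum_fiberwise_of_maps_to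
      (fun i _ => Finset.mem_union_left _ (Finset.mem_image_of_mem α (Finset.mem_univ i)))
      (fun i => (-1:ℂ) ^ (w i) * α i ^ m)]
    refine Finset.sum_congr rfl fun z hz => ?_
    rw [hcα, Finset.sum_mul]
    exact Finset.sum_congr rfl fun i hi => by rw [(Finset.mem_filter.1 hi).2]
  have hfibβ : ∀ m : ℤ, ∑ z ∈ S, cβ z * z ^ m = ∑ j, (-1:ℂ) ^ (v j) * β j ^ m := by
    intro m
    rw [← Finset.sum_fiberwise_of_maps_to
      (fun j _ => Finset.mem_union_right _ (Finset.mem_image_of_mem β (Finset.mem_univ j)))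
      (fun j => (-1:ℂ) ^ (v j) * β j ^ m)]
    refine Finset.sum_congr rfl fun z hz => ?_
    rw [hcβ, Finset.sum_mul]
    exact Finset.sum_congr rfl fun j hj => by rw [(Finset.mem_filter.1 hj).2]
  have hd0 : ∀ m : ℤ, M ≤ m → ∑ z ∈ S, (cα z - cβ z) * z ^ m = 0 := by
    intro m hm
    simp only [sub_mul]
    rw [Finset.sum_sub_distrib, hfibα, hfibβ, h m hm, sub_self]
  set m0 : ℤ := max M 0 with hm0
  have key : ∀ z ∈ S, cα z = cβ z := by
    intro z hz
    have hvz := vand_finset S (fun z => (cα z - cβ z) * z ^ m0)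
      (by
        intro k
        have : ∀ z ∈ S, (cα z - cβ z) * z ^ m0 * z ^ k = (cα z - cβ z) * z ^ (m0 + k) := by
          intro z hz
          rw [zpow_add₀ (hzne z hz), zpow_natCast, mul_assoc]
        rw [Finset.sum_congr rfl this]
        exact hd0 (m0 + k) (le_trans (le_max_left M 0)
          (le_add_of_nonneg_right (Int.ofNat_nonneg k)))) z hz
    have hz0 : (z : ℂ) ^ m0 ≠ 0 := zpow_ne_zero _ (hzne z hz)
    have := (mul_eq_zero.1 hvz).resolve_right hz0
    exact sub_eq_zero.1 this
  have hcard : ∀ (n : ℤ) (a : ℂ),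
      (Finset.univ.filter fun i => w i = n ∧ a = α i).card
        = (Finset.univ.filter fun j => v j = n ∧ a = β j).card := by
    intro n a
    by_cases ha : (∃ i, α i = a) ∨ (∃ j, β j = a)
    · have haS : a ∈ S := by
        rcases ha with ⟨i, hi⟩ | ⟨j, hj⟩
        · exact Finset.mem_union_left _ (Finset.mem_image.2 ⟨i, Finset.mem_univ i, hi⟩)
        · exact Finset.mem_union_right _ (Finset.mem_image.2 ⟨j, Finset.mem_univ j, hj⟩)
      obtain ⟨n0, hn0⟩ : ∃ n0 : ℤ, ‖a‖ = q ^ ((n0:ℝ)/2) := by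
        rcases ha with ⟨i, hi⟩ | ⟨j, hj⟩
        · exact ⟨w i, hi ▸ hα i⟩
        · exact ⟨v j, hj ▸ hβ j⟩
      have hwn : ∀ i, α i = a → w i = n0 := fun i hi =>
        wuniq ((hα i).symm.trans (by rw [hi, hn0]))
      have hvn : ∀ j, β j = a → v j = n0 := fun j hj =>
        wuniq ((hβ j).symm.trans (by rw [hj, hn0]))
      have hce := key a haS
      have hcae : cα a = ((Finset.univ.filter fun i => α i = a).card : ℂ) * (-1:ℂ) ^ n0 := by
        have e : ∀ i ∈ Finset.univ.filter (fun i => α i = a), (-1:ℂ) ^ (w i) = (-1:ℂ) ^ n0 :=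
          fun i hi => by rw [hwn i (Finset.mem_filter.1 hi).2]
        simp only [hcα]
        rw [Finset.sum_congr rfl e, Finset.sum_const, nsmul_eq_mul]
      have hcbe : cβ a = ((Finset.univ.filter fun j => β j = a).card : ℂ) * (-1:ℂ) ^ n0 := by
        have e : ∀ j ∈ Finset.univ.filter (fun j => β j = a), (-1:ℂ) ^ (v j) = (-1:ℂ) ^ n0 :=
          fun j hj => by rw [hvn j (Finset.mem_filter.1 hj).2]
        simp only [hcβ]
        rw [Finset.sum_congr rfl e, Finset.sum_const, nsmul_eq_mul]
      have hne : ((-1:ℂ)) ^ n0 ≠ 0 := zpow_ne_zero _ (by norm_num)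
      have hcards : (Finset.univ.filter fun i => α i = a).card
          = (Finset.univ.filter fun j => β j = a).card := by
        rw [hcae, hcbe] at hce
        exact_mod_cast mul_right_cancel₀ hne hce
      by_cases hn : n = n0
      · subst hn
        have e1 : (Finset.univ.filter fun i => w i = n ∧ a = α i)
            = Finset.univ.filter fun i => α i = a := by
          ext i
          simp only [Finset.mem_filter, Finset.mem_univ, true_and]
          exact ⟨fun h2 => h2.2.symm, fun h2 => ⟨hwn i h2, h2.symm⟩⟩
        have e2 : (Finset.univ.filter fun j => v j = n ∧ a = β j)
            = Finset.univ.filter fun j => β j = a := by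
          ext j
          simp only [Finset.mem_filter, Finset.mem_univ, true_and]
          exact ⟨fun h2 => h2.2.symm, fun h2 => ⟨hvn j h2, h2.symm⟩⟩
        rw [e1, e2]; exact hcards
      · rw [Finset.filter_false_of_mem (fun i _ h2 => hn (h2.1.symm.trans (hwn i h2.2.symm))),
          Finset.filter_false_of_mem (fun j _ h2 => hn (h2.1.symm.trans (hvn j h2.2.symm)))]
        rfl
    · push_neg at ha
      rw [Finset.filter_false_of_mem (fun i _ h2 => ha.1 i h2.2.symm),
        Finset.filter_false_of_mem (fun j _ h2 => ha.2 j h2.2.symm)]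
      rfl
  have hmap : ∀ n : ℤ,
      (Finset.univ.filter fun i => w i = n).val.map α
        = (Finset.univ.filter fun j => v j = n).val.map β := by
    intro n
    refine Multiset.ext.2 fun a => ?_
    rw [Multiset.count_map, Multiset.count_map, ← Finset.filter_val, ← Finset.filter_val,
      Finset.filter_filter, Finset.filter_filter]
    exact hcard n a
  refine ⟨hmap, fun n m hm => ?_⟩
  rw [Finset.sum_eq_multiset_sum, Finset.sum_eq_multiset_sum]
  have := congrArg (fun s : Multiset ℂ => (s.map (fun z => z ^ m)).sum) (hmap n)
  simpa [Multiset.map_map, Function.comp] using this
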